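/- Removing a strictly interior point does not change the smallest enclosing ball: if P ⊂ ℝ³ is finite with smallest enclosing ball (c, r) and q ∈ P satisfies ‖q − c‖ < r, then (c, r) is also the smallest enclosing ball of P \ {q}. -/

import Mathlib

/-- Removing a strictly interior point does not change the
smallest enclosing ball. -/
theorem erase_interior_point
    (P : Finset (EuclideanSpace ℝ (Fin 3)))
    (c : EuclideanSpace ℝ (Fin 3)) (r : ℝ)
    (henc : ∀ p ∈ P, ‖p - c‖ ≤ r)
    (hmin : ∀ (c' : EuclideanSpace ℝ (Fin 3)) (r' : ℝ),
      (∀ p ∈ P, ‖p - c'‖ ≤ r') → r ≤ r')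
    (q : EuclideanSpace ℝ (Fin 3)) (hqP : q ∈ P) (hq : ‖q - c‖ < r) :
    (∀ p ∈ (P : Set (EuclideanSpace ℝ (Fin 3))) \ {q}, ‖p - c‖ ≤ r) ∧
    (∀ (c' : EuclideanSpace ℝ (Fin 3)) (r' : ℝ),
      (∀ p ∈ (P : Set (EuclideanSpace ℝ (Fin 3))) \ {q}, ‖p - c'‖ ≤ r') →
      r ≤ r') := by
  constructor
  · intro p hp
    exact henc p hp.1
  · intro c' r' hcov
    set M : ℝ := max (‖q - c'‖ - r') 0 with hM
    set B : ℝ := r - ‖q - c‖ with hB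
    have hBpos : 0 < B := by simp [hB]; linarith
    have hMnn : 0 ≤ M := le_max_right _ _
    have hMB : 0 < M + B := by linarith
    set t : ℝ := M / (M + B) with ht
    set s : ℝ := B / (M + B) with hs
    have hst : s + t = 1 := by
      rw [hs, ht, ← add_div, add_comm]
      exact div_self hMB.ne'
    have hsnn : 0 < s := div_pos hBpos hMB
    have htnn : 0 ≤ t := div_nonneg hMnn (le_of_lt hMB)
    set c'' : EuclideanSpace ℝ (Fin 3) := s • c' + t • c with hc''
    set r'' : ℝ := s * r' + t * r with hr''
    have key : ∀ p ∈ P, ‖p - c''‖ ≤ r'' := by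
      intro p hpP
      have hdecomp : p - c'' = s • (p - c') + t • (p - c) := by
        rw [hc'']
        have : p = (s + t) • p := by rw [hst, one_smul]
        rw [smul_sub, smul_sub]
        nth_rewrite 1 [this]
        rw [add_smul]
        abel
      have hnorm : ‖p - c''‖ ≤ s * ‖p - c'‖ + t * ‖p - c‖ := by
        rw [hdecomp]
        calc ‖s • (p - c') + t • (p - c)‖
            ≤ ‖s • (p - c')‖ + ‖t • (p - c)‖ := norm_add_le _ _
          _ = s * ‖p - c'‖ + t * ‖p - c‖ := by
              rw [norm_smul, norm_smul, Real.norm_eq_abs, Real.norm_eq_abs,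
                abs_of_nonneg hsnn.le, abs_of_nonneg htnn]
      by_cases hpq : p = q
      · subst hpq
        have hA : ‖p - c'‖ - r' ≤ M := le_max_left _ _
        have hqc : ‖p - c‖ = r - B := by rw [hB]; ring
        have hMBeq : s * M = t * B := by
          rw [hs, ht]
          field_simp
        have : s * ‖p - c'‖ + t * ‖p - c‖ ≤ s * r' + t * r := by
          have h1 : s * (‖p - c'‖ - r') ≤ s * M :=
            mul_le_mul_of_nonneg_left hA hsnn.le
          have h2 : t * ‖p - c‖ = t * r - t * B := by rw [hqc]; ring
          nlinarith
        linarith [hnorm]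
      · have hpmem : p ∈ (P : Set (EuclideanSpace ℝ (Fin 3))) \ {q} :=
          ⟨by simpa using hpP, by simpa using hpq⟩
        have h1 : ‖p - c'‖ ≤ r' := hcov p hpmem
        have h2 : ‖p - c‖ ≤ r := henc p hpP
        have := add_le_add (mul_le_mul_of_nonneg_left h1 hsnn.le)
          (mul_le_mul_of_nonneg_left h2 htnn)
        linarith [hnorm]
    have hle : r ≤ r'' := hmin c'' r'' key
    rw [hr''] at hle
    have hsum : s * r + t * r = r := by rw [← add_mul, hst, one_mul]
    have : s * r ≤ s * r' := by linarith
    exact le_of_mul_le_mul_left this hsnn
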